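/- Let δ be an (A,B)-root. Suppose there exists α₀ ∈ C(δ) ∩ A that is strictly shorter than every other simple root in C(δ) \ {α₀}, and there exists β ∈ C(δ) \ {α₀} with c_{α₀}(δ) = −2(β,α₀)/(α₀,α₀). Then σ = β − (2(β,α₀)/(α₀,α₀))·α₀ is an (A,B)-root of length |β| satisfying σ ≤ δ, Σ_{α∈A} c_α(σ)·(α,α) ≥ Σ_{β'∈B} c_{β'}(σ)·(β',β'), and all simple roots in C(δ−σ) have the same length not greater than |σ|; in particular, δ is a significant (A,B)-root. -/

import Mathlib

open scoped RealInnerProductSpace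
open scoped Classical

/-- A reduced crystallographic root system `roots` spanning a real inner product
space `V`, with a chosen set `pos` of positive roots, the corresponding base
`simple` of simple roots, and the coefficient function `coeff`, where
`coeff ξ α = c_α(ξ)` is the coefficient of the simple root `α` in the unique
expression `ξ = ∑_{α ∈ simple} c_α(ξ) • α`. -/
structure RootSystemData (V : Type*) [NormedAddCommGroup V] [InnerProductSpace ℝ V] where
  roots : Finset V
  pos : Finset V
  simple : Finset V
  coeff : V → V → ℝ
  pos_subset : pos ⊆ roots
  simple_subset : simple ⊆ pos
  root_ne_zero : ∀ δ ∈ roots, δ ≠ (0 : V)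
  neg_mem : ∀ δ ∈ roots, -δ ∈ roots
  pos_or_neg : ∀ δ ∈ roots, δ ∈ pos ∨ -δ ∈ pos
  pos_neg_not : ∀ δ ∈ pos, -δ ∉ pos
  reduced : ∀ δ ∈ roots, ∀ t : ℝ, t • δ ∈ roots → t = 1 ∨ t = -1
  crystallographic : ∀ δ ∈ roots, ∀ ε ∈ roots, ∃ n : ℤ, 2 * ⟪δ, ε⟫ / ⟪ε, ε⟫ = (n : ℝ)
  reflect_mem : ∀ δ ∈ roots, ∀ ε ∈ roots, δ - (2 * ⟪δ, ε⟫ / ⟪ε, ε⟫) • ε ∈ roots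
  span_eq_top : Submodule.span ℝ (simple : Set V) = ⊤
  linearIndependent : LinearIndependent ℝ (fun α : simple => (α : V))
  coeff_spec : ∀ ξ : V, ξ = ∑ α ∈ simple, coeff ξ α • α
  pos_coeff_nonneg : ∀ δ ∈ pos, ∀ α ∈ simple, 0 ≤ coeff δ α

namespace RootSystemData

variable {V : Type*} [NormedAddCommGroup V] [InnerProductSpace ℝ V]

/-- The support `C(ξ)` of `ξ`: the set of simple roots with nonzero coefficient in `ξ`. -/
noncomputable def support (R : RootSystemData V) (ξ : V) : Finset V :=
  R.simple.filter fun α => R.coeff ξ α ≠ 0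

/-- The coefficientwise partial order: `x ≤ y` iff `c_α(x) ≤ c_α(y)` for all simple `α`. -/
def cle (R : RootSystemData V) (x y : V) : Prop :=
  ∀ α ∈ R.simple, R.coeff x α ≤ R.coeff y α

/-- An `(A,B)`-root: a positive root whose support lies in `A ∪ B` and which has a
strictly positive coefficient at some element of `A`. -/
def IsABRoot (R : RootSystemData V) (A B : Finset V) (δ : V) : Prop :=
  δ ∈ R.pos ∧ R.support δ ⊆ A ∪ B ∧ ∃ α₀ ∈ A, 0 < R.coeff δ α₀

/-- A significant `(A,B)`-root. -/
def IsSignificant (R : RootSystemData V) (A B : Finset V) (δ : V) : Prop :=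
  R.IsABRoot A B δ ∧ ∃ σ : V, R.IsABRoot A B σ ∧ R.cle σ δ ∧
    (∑ β ∈ B, R.coeff σ β * ⟪β, β⟫) ≤ (∑ α ∈ A, R.coeff σ α * ⟪α, α⟫) ∧
    (∀ x ∈ R.support (δ - σ), ∀ y ∈ R.support (δ - σ), ‖x‖ = ‖y‖) ∧
    (∀ x ∈ R.support (δ - σ), ‖x‖ ≤ ‖σ‖)

/-- `ℓ(A,B)`, the number of significant `(A,B)`-roots. -/
noncomputable def ell (R : RootSystemData V) (A B : Finset V) : ℕ :=
  (R.pos.filter fun δ => R.IsSignificant A B δ).card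

/-- `γ`, the half-sum of the positive roots. -/
noncomputable def gamma (R : RootSystemData V) : V :=
  (2 : ℝ)⁻¹ • ∑ δ ∈ R.pos, δ

/-- A weight: `2(β,α)/(α,α) ∈ ℤ` for all roots `α`. -/
def IsWeight (R : RootSystemData V) (β : V) : Prop :=
  ∀ δ ∈ R.roots, ∃ n : ℤ, 2 * ⟪β, δ⟫ / ⟪δ, δ⟫ = (n : ℝ)

/-- A regular weight: not orthogonal to any positive root. -/
def IsRegular (R : RootSystemData V) (lam : V) : Prop :=
  ∀ δ ∈ R.pos, ⟪lam, δ⟫ ≠ 0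

end RootSystemData
namespace RootSystemData

variable {V : Type*} [NormedAddCommGroup V] [InnerProductSpace ℝ V] (R : RootSystemData V)

lemma inner_self_pos' {x : V} (hx : x ≠ 0) : 0 < ⟪x, x⟫ := by
  rw [real_inner_self_eq_norm_mul_norm]
  have : 0 < ‖x‖ := norm_pos_iff.mpr hx
  positivity

lemma norm_eq_of_inner_self_eq {x y : V} (h : ⟪x, x⟫ = ⟪y, y⟫) : ‖x‖ = ‖y‖ := by
  rw [real_inner_self_eq_norm_mul_norm, real_inner_self_eq_norm_mul_norm] at h
  exact (mul_self_inj_of_nonneg (norm_nonneg x) (norm_nonneg y)).mp h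

lemma sum_coeff_zero {g : V → ℝ} (h : ∑ α ∈ R.simple, g α • α = 0) :
    ∀ α ∈ R.simple, g α = 0 := by
  intro α hα
  have h' : ∑ i ∈ R.simple.attach, g (i : V) • (i : V) = 0 := by
    rwa [Finset.sum_attach R.simple (fun α => g α • α)]
  exact linearIndependent_iff'.mp R.linearIndependent R.simple.attach
    (fun i => g (i : V)) h' ⟨α, hα⟩ (Finset.mem_attach _ _)

lemma coeff_eq {f : V → ℝ} {ξ : V} (h : ξ = ∑ α ∈ R.simple, f α • α) :
    ∀ α ∈ R.simple, R.coeff ξ α = f α := by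
  intro α hα
  have hz : ∑ α ∈ R.simple, (R.coeff ξ α - f α) • α = 0 := by
    simp only [sub_smul, Finset.sum_sub_distrib]
    rw [← R.coeff_spec ξ, ← h, sub_self]
  have := R.sum_coeff_zero hz α hα
  linarith

lemma coeff_sub {x y : V} {α : V} (hα : α ∈ R.simple) :
    R.coeff (x - y) α = R.coeff x α - R.coeff y α := by
  have h : (x - y : V) = ∑ γ ∈ R.simple, (R.coeff x γ - R.coeff y γ) • γ := by
    simp only [sub_smul, Finset.sum_sub_distrib]
    rw [← R.coeff_spec x, ← R.coeff_spec y]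
  exact R.coeff_eq h α hα

lemma coeff_neg {x : V} {α : V} (hα : α ∈ R.simple) :
    R.coeff (-x) α = -R.coeff x α := by
  have h : (-x : V) = ∑ γ ∈ R.simple, (-R.coeff x γ) • γ := by
    simp only [neg_smul]
    rw [Finset.sum_neg_distrib, ← R.coeff_spec x]
  exact R.coeff_eq h α hα

lemma coeff_simple {γ : V} (hγ : γ ∈ R.simple) {α : V} (hα : α ∈ R.simple) :
    R.coeff γ α = if α = γ then 1 else 0 := by
  have h : γ = ∑ α ∈ R.simple, (if α = γ then (1:ℝ) else 0) • α := by
    have hc : ∀ α ∈ R.simple, (if α = γ then (1:ℝ) else 0) • α = if α = γ then α else 0 := by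
      intro α _
      by_cases h : α = γ <;> simp [h]
    rw [Finset.sum_congr rfl hc, Finset.sum_ite_eq' R.simple γ (fun x => x), if_pos hγ]
  exact R.coeff_eq h α hα

lemma support_simple {γ : V} (hγ : γ ∈ R.simple) : R.support γ = {γ} := by
  ext α
  simp only [support, Finset.mem_filter, Finset.mem_singleton]
  constructor
  · rintro ⟨hα, hne⟩
    rw [R.coeff_simple hγ hα] at hne
    by_contra h
    simp [h] at hne
  · rintro rfl
    refine ⟨hγ, ?_⟩
    rw [R.coeff_simple hγ hγ]
    simp

lemma support_subset_simple (ξ : V) : R.support ξ ⊆ R.simple :=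
  Finset.filter_subset _ _

lemma mem_support_iff {ξ α : V} : α ∈ R.support ξ ↔ α ∈ R.simple ∧ R.coeff ξ α ≠ 0 := by
  unfold support
  exact Finset.mem_filter

lemma mem_pos_of_coeff_pos {δ : V} (hδ : δ ∈ R.roots) {α : V} (hα : α ∈ R.simple)
    (h : 0 < R.coeff δ α) : δ ∈ R.pos := by
  rcases R.pos_or_neg δ hδ with h1 | h1
  · exact h1
  · exfalso
    have := R.pos_coeff_nonneg _ h1 α hα
    rw [R.coeff_neg hα] at this
    linarith

/-- Key dichotomy for a pair of non-orthogonal roots. -/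
lemma key_pair {u v : V} (hu : u ∈ R.roots) (hv : v ∈ R.roots) (h0 : ⟪u, v⟫ ≠ 0) :
    (v = u ∨ v = -u) ∨
    ∃ n m : ℤ, 2 * ⟪u, v⟫ / ⟪v, v⟫ = (n : ℝ) ∧ 2 * ⟪v, u⟫ / ⟪u, u⟫ = (m : ℝ) ∧
      1 ≤ n * m ∧ n * m ≤ 3 := by
  obtain ⟨n, hn⟩ := R.crystallographic u hu v hv
  obtain ⟨m, hm⟩ := R.crystallographic v hv u hu
  have hu0 : u ≠ 0 := R.root_ne_zero u hu
  have hv0 : v ≠ 0 := R.root_ne_zero v hv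
  have huu : 0 < ⟪u, u⟫ := inner_self_pos' hu0
  have hvv : 0 < ⟪v, v⟫ := inner_self_pos' hv0
  have hnm : (n : ℝ) * m = 4 * ⟪u, v⟫ ^ 2 / (⟪u, u⟫ * ⟪v, v⟫) := by
    rw [← hn, ← hm, real_inner_comm v u]
    field_simp [ne_of_gt huu, ne_of_gt hvv]
    ring
  have hcs : ⟪u, v⟫ * ⟪u, v⟫ ≤ ⟪u, u⟫ * ⟪v, v⟫ := real_inner_mul_inner_self_le u v
  have hnm4 : (n : ℝ) * m ≤ 4 := by
    rw [hnm, div_le_iff₀ (by positivity)]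
    nlinarith
  have hnmpos : (0 : ℝ) < (n : ℝ) * m := by
    rw [hnm]
    have hsq : (0:ℝ) < ⟪u, v⟫ ^ 2 :=
      lt_of_le_of_ne (sq_nonneg _) (Ne.symm (pow_ne_zero 2 h0))
    exact div_pos (by linarith) (mul_pos huu hvv)
  have hnm1 : 1 ≤ n * m := by
    have : (0:ℝ) < ((n * m : ℤ) : ℝ) := by push_cast; linarith
    have : 0 < n * m := by exact_mod_cast this
    omega
  have hnm4' : n * m ≤ 4 := by
    have : ((n * m : ℤ) : ℝ) ≤ 4 := by push_cast; linarith
    exact_mod_cast this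
  by_cases hc4 : n * m = 4
  · -- equality in Cauchy-Schwarz
    left
    have heq : ⟪u, v⟫ * ⟪u, v⟫ = ⟪u, u⟫ * ⟪v, v⟫ := by
      have h4 : (n : ℝ) * m = 4 := by exact_mod_cast congrArg (Int.cast : ℤ → ℝ) hc4
      rw [hnm] at h4
      have := (div_eq_iff (ne_of_gt (mul_pos huu hvv))).mp h4
      nlinarith
    have habs : |⟪u, v⟫ / (‖u‖ * ‖v‖)| = 1 := by
      rw [real_inner_self_eq_norm_mul_norm, real_inner_self_eq_norm_mul_norm] at heq
      rw [abs_div, abs_of_nonneg (by positivity : (0:ℝ) ≤ ‖u‖ * ‖v‖)]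
      rw [div_eq_one_iff_eq (mul_ne_zero (norm_ne_zero_iff.mpr hu0) (norm_ne_zero_iff.mpr hv0))]
      nlinarith [abs_nonneg ⟪u, v⟫, sq_abs ⟪u, v⟫, norm_nonneg u, norm_nonneg v,
        mul_pos (norm_pos_iff.mpr hu0) (norm_pos_iff.mpr hv0)]
    obtain ⟨-, r, hr0, hr⟩ := (abs_real_inner_div_norm_mul_norm_eq_one_iff u v).mp habs
    have := R.reduced u hu r (by rw [← hr]; exact hv)
    rcases this with h1 | h1
    · left; rw [hr, h1, one_smul]
    · right; rw [hr, h1, neg_smul, one_smul]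
  · right
    exact ⟨n, m, hn, hm, hnm1, by omega⟩

/-- If two roots have positive inner product and are distinct, their difference is a root. -/
lemma sub_mem_roots {u v : V} (hu : u ∈ R.roots) (hv : v ∈ R.roots)
    (hne : u ≠ v) (hpos : 0 < ⟪u, v⟫) : u - v ∈ R.roots := by
  have huu : 0 < ⟪u, u⟫ := inner_self_pos' (R.root_ne_zero u hu)
  have hvv : 0 < ⟪v, v⟫ := inner_self_pos' (R.root_ne_zero v hv)
  rcases R.key_pair hu hv (ne_of_gt hpos) with h | ⟨n, m, hn, hm, h1, h3⟩
  · rcases h with h | h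
    · exact absurd h.symm hne
    · rw [h] at hpos
      rw [inner_neg_right] at hpos
      linarith
  · have hnpos : 0 < n := by
      by_contra h
      push_neg at h
      have : (n : ℝ) ≤ 0 := by exact_mod_cast h
      rw [← hn] at this
      have h2 : 0 < 2 * ⟪u, v⟫ / ⟪v, v⟫ := div_pos (by linarith) hvv
      linarith
    have hmpos : 0 < m := by
      by_contra h
      push_neg at h
      have : (m : ℝ) ≤ 0 := by exact_mod_cast h
      rw [← hm, real_inner_comm] at this
      have h2 : 0 < 2 * ⟪u, v⟫ / ⟪u, u⟫ := div_pos (by linarith) huu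
      linarith
    have hone : n = 1 ∨ m = 1 := by
      by_contra hcon
      push_neg at hcon
      have h2 : 2 ≤ n := by omega
      have h2' : 2 ≤ m := by omega
      nlinarith
    rcases hone with h | h
    · have hre := R.reflect_mem u hu v hv
      rw [hn, h] at hre
      simpa using hre
    · have hre := R.reflect_mem v hv u hu
      rw [hm, h] at hre
      simp only [Int.cast_one, one_smul] at hre
      have := R.neg_mem _ hre
      simpa using this

/-- Reflections preserve the inner square. -/
lemma reflect_inner_self (z b : V) (hb : ⟪b, b⟫ ≠ 0) :
    ⟪z - (2 * ⟪z, b⟫ / ⟪b, b⟫) • b, z - (2 * ⟪z, b⟫ / ⟪b, b⟫) • b⟫ = ⟪z, z⟫ := by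
  set t : ℝ := 2 * ⟪z, b⟫ / ⟪b, b⟫ with ht
  have htb : t * ⟪b, b⟫ = 2 * ⟪z, b⟫ := div_mul_cancel₀ _ hb
  have hexp : ⟪z - t • b, z - t • b⟫ = ⟪z, z⟫ - 2 * t * ⟪z, b⟫ + t * (t * ⟪b, b⟫) := by
    simp only [inner_sub_left, inner_sub_right, real_inner_smul_left, real_inner_smul_right,
      real_inner_comm b z]
    ring
  rw [hexp, htb]
  ring

end RootSystemData
namespace RootSystemData

variable {V : Type*} [NormedAddCommGroup V] [InnerProductSpace ℝ V] (R : RootSystemData V)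

/-- A non-simple positive root can be written as a positive root plus a simple root. -/
lemma exists_sub_simple {δ : V} (hδ : δ ∈ R.pos) (hns : δ ∉ R.simple) :
    ∃ α ∈ R.simple, 0 < R.coeff δ α ∧ 0 < ⟪δ, α⟫ ∧ δ - α ∈ R.pos := by
  have hδr : δ ∈ R.roots := R.pos_subset hδ
  have hδ0 : δ ≠ 0 := R.root_ne_zero δ hδr
  have hdd : 0 < ⟪δ, δ⟫ := inner_self_pos' hδ0
  have hsum : ⟪δ, δ⟫ = ∑ α ∈ R.simple, R.coeff δ α * ⟪δ, α⟫ := by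
    rw [show (⟪δ, δ⟫ : ℝ) = ⟪(∑ α ∈ R.simple, R.coeff δ α • α : V), δ⟫ by
      rw [← R.coeff_spec δ]]
    rw [sum_inner]
    exact Finset.sum_congr rfl fun α _ => by
      rw [real_inner_smul_left, real_inner_comm]
  obtain ⟨α, hα, hterm⟩ : ∃ α ∈ R.simple, 0 < R.coeff δ α * ⟪δ, α⟫ := by
    by_contra h
    push_neg at h
    have : ⟪δ, δ⟫ ≤ 0 := by
      rw [hsum]
      exact Finset.sum_nonpos h
    linarith
  have hcnn : 0 ≤ R.coeff δ α := R.pos_coeff_nonneg δ hδ α hα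
  have hcpos : 0 < R.coeff δ α := by
    rcases lt_or_eq_of_le hcnn with h | h
    · exact h
    · exfalso; rw [← h] at hterm; simp at hterm
  have hip : 0 < ⟪δ, α⟫ := by nlinarith
  have hne : δ ≠ α := fun h => hns (h ▸ hα)
  have hαr : α ∈ R.roots := R.pos_subset (R.simple_subset hα)
  have hroot : δ - α ∈ R.roots := R.sub_mem_roots hδr hαr hne hip
  refine ⟨α, hα, hcpos, hip, ?_⟩
  by_contra hnp
  rcases R.pos_or_neg _ hroot with h | h
  · exact hnp h
  · have hle : ∀ γ ∈ R.simple, R.coeff δ γ ≤ (if γ = α then 1 else 0 : ℝ) := by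
      intro γ hγ
      have h1 := R.pos_coeff_nonneg _ h γ hγ
      rw [R.coeff_neg hγ, R.coeff_sub hγ, R.coeff_simple hα hγ] at h1
      linarith
    have hδeq : δ = R.coeff δ α • α := by
      conv_lhs => rw [R.coeff_spec δ]
      have hcong : ∀ γ ∈ R.simple, R.coeff δ γ • γ =
          if γ = α then R.coeff δ α • α else 0 := by
        intro γ hγ
        by_cases hh : γ = α
        · subst hh; simp
        · have h1 := hle γ hγ
          rw [if_neg hh] at h1
          have h2 := R.pos_coeff_nonneg δ hδ γ hγ
          have h3 : R.coeff δ γ = 0 := le_antisymm h1 h2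
          rw [h3, if_neg hh, zero_smul]
      rw [Finset.sum_congr rfl hcong,
        Finset.sum_ite_eq' R.simple α (fun _ => R.coeff δ α • α), if_pos hα]
    rcases R.reduced α hαr (R.coeff δ α) (by rw [← hδeq]; exact hδr) with h1 | h1
    · rw [h1, one_smul] at hδeq
      exact hne hδeq
    · rw [h1] at hcpos; linarith

/-- Height of a vector: the sum of its coefficients. -/
noncomputable def heightR (ξ : V) : ℝ := ∑ α ∈ R.simple, R.coeff ξ α

lemma height_sub_simple {δ α : V} (hα : α ∈ R.simple) :
    R.heightR (δ - α) = R.heightR δ - 1 := by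
  unfold heightR
  rw [show ∑ γ ∈ R.simple, R.coeff (δ - α) γ
      = ∑ γ ∈ R.simple, (R.coeff δ γ - if γ = α then 1 else 0) from
    Finset.sum_congr rfl fun γ hγ => by rw [R.coeff_sub hγ, R.coeff_simple hα hγ]]
  rw [Finset.sum_sub_distrib, Finset.sum_ite_eq' R.simple α (fun _ => (1 : ℝ)), if_pos hα]

lemma filter_card_lt {δ α : V} (hα : α ∈ R.simple) (hδ' : δ - α ∈ R.pos) :
    (R.pos.filter fun γ => R.heightR γ < R.heightR (δ - α)).card <
      (R.pos.filter fun γ => R.heightR γ < R.heightR δ).card := by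
  have hh : R.heightR (δ - α) = R.heightR δ - 1 := R.height_sub_simple hα
  apply Finset.card_lt_card
  rw [Finset.ssubset_iff_of_subset]
  · refine ⟨δ - α, Finset.mem_filter.mpr ⟨hδ', by rw [hh]; linarith⟩, fun hmem => ?_⟩
    exact absurd (Finset.mem_filter.mp hmem).2 (lt_irrefl _)
  · intro γ hγ
    rw [Finset.mem_filter] at hγ ⊢
    refine ⟨hγ.1, ?_⟩
    rw [hh] at hγ
    linarith [hγ.2]

lemma coeff_int_aux : ∀ k : ℕ, ∀ δ ∈ R.pos,
    (R.pos.filter fun γ => R.heightR γ < R.heightR δ).card ≤ k →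
    ∀ α ∈ R.simple, ∃ n : ℤ, R.coeff δ α = (n : ℝ) := by
  intro k
  induction k with
  | zero =>
    intro δ hδ hcard α hα
    by_cases hs : δ ∈ R.simple
    · exact ⟨if α = δ then 1 else 0, by rw [R.coeff_simple hs hα]; split <;> simp⟩
    · obtain ⟨α', hα', -, -, hδ'⟩ := R.exists_sub_simple hδ hs
      have := R.filter_card_lt hα' hδ'
      omega
  | succ k ih =>
    intro δ hδ hcard α hα
    by_cases hs : δ ∈ R.simple
    · exact ⟨if α = δ then 1 else 0, by rw [R.coeff_simple hs hα]; split <;> simp⟩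
    · obtain ⟨α', hα', -, -, hδ'⟩ := R.exists_sub_simple hδ hs
      have hlt := R.filter_card_lt hα' hδ'
      obtain ⟨n, hn⟩ := ih (δ - α') hδ' (by omega) α hα
      have hsub := R.coeff_sub (x := δ) (y := α') hα
      rw [R.coeff_simple hα' hα] at hsub
      by_cases hh : α = α'
      · refine ⟨n + 1, ?_⟩
        rw [if_pos hh] at hsub
        push_cast
        rw [hn] at hsub
        linarith
      · refine ⟨n, ?_⟩
        rw [if_neg hh, sub_zero] at hsub
        rw [← hsub, hn]

lemma coeff_int {δ : V} (hδ : δ ∈ R.pos) {α : V} (hα : α ∈ R.simple) :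
    ∃ n : ℤ, R.coeff δ α = (n : ℝ) :=
  R.coeff_int_aux _ δ hδ le_rfl α hα

lemma support_connected_aux : ∀ k : ℕ, ∀ δ ∈ R.pos,
    (R.pos.filter fun γ => R.heightR γ < R.heightR δ).card ≤ k →
    ∀ S₁ S₂ : Finset V, R.support δ ⊆ S₁ ∪ S₂ →
    (∀ u ∈ S₁, ∀ v ∈ S₂, ⟪u, v⟫ = 0) → Disjoint S₁ S₂ →
    (S₁ ∩ R.support δ).Nonempty → (S₂ ∩ R.support δ).Nonempty → False := by
  intro k
  induction k with
  | zero =>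
    intro δ hδ hcard S₁ S₂ hcover horth hdisj h1 h2
    by_cases hs : δ ∈ R.simple
    · obtain ⟨x, hx⟩ := h1
      obtain ⟨y, hy⟩ := h2
      rw [R.support_simple hs] at hx hy
      simp only [Finset.mem_inter, Finset.mem_singleton] at hx hy
      exact Finset.disjoint_left.mp hdisj (hx.2 ▸ hx.1) (hy.2 ▸ hy.1)
    · obtain ⟨α, hα, -, -, hδ'⟩ := R.exists_sub_simple hδ hs
      have := R.filter_card_lt hα hδ'
      omega
  | succ k ih =>
    intro δ hδ hcard S₁ S₂ hcover horth hdisj h1 h2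
    by_cases hs : δ ∈ R.simple
    · obtain ⟨x, hx⟩ := h1
      obtain ⟨y, hy⟩ := h2
      rw [R.support_simple hs] at hx hy
      simp only [Finset.mem_inter, Finset.mem_singleton] at hx hy
      exact Finset.disjoint_left.mp hdisj (hx.2 ▸ hx.1) (hy.2 ▸ hy.1)
    · obtain ⟨α, hα, hcα, hip, hδ'⟩ := R.exists_sub_simple hδ hs
      have hαsupp : α ∈ R.support δ := Finset.mem_filter.mpr ⟨hα, ne_of_gt hcα⟩
      have hcoeffeq : ∀ γ ∈ R.simple, γ ≠ α → R.coeff (δ - α) γ = R.coeff δ γ := by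
        intro γ hγ hne
        rw [R.coeff_sub hγ, R.coeff_simple hα hγ, if_neg hne, sub_zero]
      have hsupp' : R.support (δ - α) ⊆ R.support δ := by
        intro γ hγ'
        have hγs := R.support_subset_simple (δ - α) hγ'
        by_cases hh : γ = α
        · exact hh ▸ hαsupp
        · rw [R.mem_support_iff] at hγ' ⊢
          exact ⟨hγs, by rw [← hcoeffeq γ hγs hh]; exact hγ'.2⟩
      have hcardlt := R.filter_card_lt hα hδ'
      have main : ∀ T₁ T₂ : Finset V, R.support δ ⊆ T₁ ∪ T₂ →
          (∀ u ∈ T₁, ∀ v ∈ T₂, ⟪u, v⟫ = 0) → Disjoint T₁ T₂ →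
          (T₁ ∩ R.support δ).Nonempty → α ∈ T₂ → False := by
        intro T₁ T₂ hcovT horthT hdisjT hne1 hαT₂
        have hT1ne : (T₁ ∩ R.support (δ - α)).Nonempty := by
          obtain ⟨x, hx⟩ := hne1
          rw [Finset.mem_inter] at hx
          have hxα : x ≠ α := fun hxa =>
            Finset.disjoint_left.mp hdisjT hx.1 (hxa ▸ hαT₂)
          refine ⟨x, Finset.mem_inter.mpr ⟨hx.1, ?_⟩⟩
          rw [R.mem_support_iff]
          refine ⟨R.support_subset_simple δ hx.2, ?_⟩
          rw [hcoeffeq x (R.support_subset_simple δ hx.2) hxα]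
          exact (Finset.mem_filter.mp hx.2).2
        by_cases hT2 : (T₂ ∩ R.support (δ - α)).Nonempty
        · exact ih (δ - α) hδ' (by omega) T₁ T₂
            (fun γ hγ => hcovT (hsupp' hγ)) horthT hdisjT hT1ne hT2
        · have hsuppT1 : ∀ γ ∈ R.support (δ - α), γ ∈ T₁ := by
            intro γ hγ
            rcases Finset.mem_union.mp (hcovT (hsupp' hγ)) with hmem | hmem
            · exact hmem
            · exact absurd ⟨γ, Finset.mem_inter.mpr ⟨hmem, hγ⟩⟩ hT2
          have hαnot : α ∉ R.support (δ - α) := fun hmem =>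
            Finset.disjoint_left.mp hdisjT (hsuppT1 α hmem) hαT₂
          have hcα' : R.coeff (δ - α) α = 0 := by
            by_contra hne
            exact hαnot (Finset.mem_filter.mpr ⟨hα, hne⟩)
          have hαr : α ∈ R.roots := R.pos_subset (R.simple_subset hα)
          have hip0 : ⟪(δ - α : V), α⟫ = 0 := by
            rw [show ((δ - α : V)) = ∑ γ ∈ R.simple, R.coeff (δ - α) γ • γ from
              R.coeff_spec (δ - α)]
            rw [sum_inner]
            apply Finset.sum_eq_zero
            intro γ hγ
            rw [real_inner_smul_left]
            by_cases hz : R.coeff (δ - α) γ = 0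
            · rw [hz, zero_mul]
            · have hγsupp : γ ∈ R.support (δ - α) := Finset.mem_filter.mpr ⟨hγ, hz⟩
              rw [horthT γ (hsuppT1 γ hγsupp) α hαT₂, mul_zero]
          have hδα : ⟪δ, α⟫ = ⟪α, α⟫ := by
            have hsplit : δ = (δ - α) + α := by abel
            rw [hsplit, inner_add_left, hip0, zero_add]
          have haa : (0 : ℝ) < ⟪α, α⟫ := inner_self_pos' (R.root_ne_zero α hαr)
          have hrefl := R.reflect_mem δ (R.pos_subset hδ) α hαr
          have h2s : 2 * ⟪δ, α⟫ / ⟪α, α⟫ = 2 := by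
            rw [hδα, mul_div_assoc, div_self (ne_of_gt haa), mul_one]
          rw [h2s] at hrefl
          have heq2 : δ - (2 : ℝ) • α = (δ - α) - α := by
            rw [two_smul]; abel
          rw [heq2] at hrefl
          obtain ⟨x, hx⟩ := hT1ne
          have hxsupp : x ∈ R.support (δ - α) := (Finset.mem_inter.mp hx).2
          have hxs : x ∈ R.simple := R.support_subset_simple (δ - α) hxsupp
          have hxα : x ≠ α := fun hxa => hαnot (hxa ▸ hxsupp)
          have hcx : 0 < R.coeff (δ - α) x :=
            lt_of_le_of_ne (R.pos_coeff_nonneg (δ - α) hδ' x hxs)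
              (Ne.symm (Finset.mem_filter.mp hxsupp).2)
          have hcx2 : 0 < R.coeff ((δ - α) - α) x := by
            rw [R.coeff_sub hxs, R.coeff_simple hα hxs, if_neg hxα, sub_zero]
            exact hcx
          have hppos := R.mem_pos_of_coeff_pos hrefl hxs hcx2
          have hfinal := R.pos_coeff_nonneg _ hppos α hα
          rw [R.coeff_sub hα, R.coeff_simple hα hα, if_pos rfl, hcα'] at hfinal
          linarith
      rcases Finset.mem_union.mp (hcover hαsupp) with hαS | hαS
      · exact main S₂ S₁ (fun γ hγ => by
            rcases Finset.mem_union.mp (hcover hγ) with h' | h'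
            · exact Finset.mem_union_right _ h'
            · exact Finset.mem_union_left _ h')
          (fun u hu v hv => by rw [real_inner_comm]; exact horth v hv u hu)
          hdisj.symm h2 hαS
      · exact main S₁ S₂ hcover horth hdisj h1 hαS

lemma support_connected {δ : V} (hδ : δ ∈ R.pos) (S₁ S₂ : Finset V)
    (hcover : R.support δ ⊆ S₁ ∪ S₂) (horth : ∀ u ∈ S₁, ∀ v ∈ S₂, ⟪u, v⟫ = 0)
    (hdisj : Disjoint S₁ S₂) (h1 : (S₁ ∩ R.support δ).Nonempty)
    (h2 : (S₂ ∩ R.support δ).Nonempty) : False :=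
  R.support_connected_aux _ δ hδ le_rfl S₁ S₂ hcover horth hdisj h1 h2

end RootSystemData
namespace RootSystemData

variable {V : Type*} [NormedAddCommGroup V] [InnerProductSpace ℝ V] (R : RootSystemData V)

lemma reach_all {δ : V} (hδ : δ ∈ R.pos) {α₀ : V} (hα₀ : α₀ ∈ R.support δ) :
    ∀ x ∈ R.support δ, Relation.ReflTransGen
      (fun u v => u ∈ R.support δ ∧ v ∈ R.support δ ∧ u ≠ v ∧ ⟪u, v⟫ ≠ 0) α₀ x := by
  intro x hx
  by_contra hreach
  set E := fun u v => u ∈ R.support δ ∧ v ∈ R.support δ ∧ u ≠ v ∧ ⟪u, v⟫ ≠ 0 with hE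
  refine R.support_connected hδ
    ((R.support δ).filter (fun y => Relation.ReflTransGen E α₀ y))
    ((R.support δ).filter (fun y => ¬ Relation.ReflTransGen E α₀ y))
    ?_ ?_ ?_ ?_ ?_
  · intro γ hγ
    rw [Finset.mem_union]
    by_cases h : Relation.ReflTransGen E α₀ γ
    · exact Or.inl (Finset.mem_filter.mpr ⟨hγ, h⟩)
    · exact Or.inr (Finset.mem_filter.mpr ⟨hγ, h⟩)
  · intro u hu v hv
    by_contra h0
    rw [Finset.mem_filter] at hu hv
    have hne : u ≠ v := fun h => hv.2 (h ▸ hu.2)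
    exact hv.2 (hu.2.tail ⟨hu.1, hv.1, hne, h0⟩)
  · rw [Finset.disjoint_left]
    intro a ha hb
    exact (Finset.mem_filter.mp hb).2 (Finset.mem_filter.mp ha).2
  · exact ⟨α₀, Finset.mem_inter.mpr
      ⟨Finset.mem_filter.mpr ⟨hα₀, Relation.ReflTransGen.refl⟩, hα₀⟩⟩
  · exact ⟨x, Finset.mem_inter.mpr ⟨Finset.mem_filter.mpr ⟨hx, hreach⟩, hx⟩⟩

lemma propagate {δ : V} {x y : V}
    (h : Relation.ReflTransGen
      (fun u v => u ∈ R.support δ ∧ v ∈ R.support δ ∧ u ≠ v ∧ ⟪u, v⟫ ≠ 0) x y)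
    (hx : x ∈ R.support δ) :
    ∃ z ∈ R.roots, ⟪z, z⟫ = ⟪x, x⟫ ∧ (z = y ∨ ⟪z, y⟫ ≠ 0) := by
  induction h with
  | refl =>
    exact ⟨x, R.pos_subset (R.simple_subset (R.support_subset_simple δ hx)), rfl, Or.inl rfl⟩
  | @tail b c hab hbc ih =>
    obtain ⟨z, hz, hzz, hzb⟩ := ih
    obtain ⟨hbs, hcs, hbc', hibc⟩ := hbc
    have hbr : b ∈ R.roots := R.pos_subset (R.simple_subset (R.support_subset_simple δ hbs))
    by_cases hzc : ⟪z, c⟫ ≠ 0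
    · exact ⟨z, hz, hzz, Or.inr hzc⟩
    · push_neg at hzc
      have hzb' : ⟪z, b⟫ ≠ 0 := by
        rcases hzb with rfl | hzb
        · exact absurd hzc hibc
        · exact hzb
      have hbb : ⟪b, b⟫ ≠ 0 := ne_of_gt (inner_self_pos' (R.root_ne_zero b hbr))
      refine ⟨z - (2 * ⟪z, b⟫ / ⟪b, b⟫) • b, R.reflect_mem z hz b hbr, ?_, Or.inr ?_⟩
      · rw [reflect_inner_self z b hbb]
        exact hzz
      · rw [inner_sub_left, real_inner_smul_left, hzc, zero_sub, neg_ne_zero]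
        exact mul_ne_zero (div_ne_zero (mul_ne_zero two_ne_zero hzb') hbb) hibc

lemma length_ratio {u v : V} (hu : u ∈ R.roots) (hv : v ∈ R.roots) (h0 : ⟪u, v⟫ ≠ 0) :
    ⟪v, v⟫ = ⟪u, u⟫ ∨ ⟪v, v⟫ = 2 * ⟪u, u⟫ ∨ ⟪v, v⟫ = 3 * ⟪u, u⟫ ∨
      ⟪u, u⟫ = 2 * ⟪v, v⟫ ∨ ⟪u, u⟫ = 3 * ⟪v, v⟫ := by
  have huu : (0:ℝ) < ⟪u, u⟫ := inner_self_pos' (R.root_ne_zero u hu)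
  have hvv : (0:ℝ) < ⟪v, v⟫ := inner_self_pos' (R.root_ne_zero v hv)
  rcases R.key_pair hu hv h0 with h | ⟨n, m, hn, hm, h1, h3⟩
  · left
    rcases h with h | h <;> rw [h] <;> simp
  · have hrel : (n : ℝ) * ⟪v, v⟫ = (m : ℝ) * ⟪u, u⟫ := by
      have e1 : (n : ℝ) * ⟪v, v⟫ = 2 * ⟪u, v⟫ := by
        rw [← hn, div_mul_cancel₀ _ (ne_of_gt hvv)]
      have e2 : (m : ℝ) * ⟪u, u⟫ = 2 * ⟪v, u⟫ := by
        rw [← hm, div_mul_cancel₀ _ (ne_of_gt huu)]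
      rw [e1, e2, real_inner_comm]
    have hnd : n ∣ n * m := dvd_mul_right n m
    have hmd : m ∣ n * m := dvd_mul_left m n
    have hn3 : n ≤ 3 := le_trans (Int.le_of_dvd (by omega) hnd) h3
    have hm3 : m ≤ 3 := le_trans (Int.le_of_dvd (by omega) hmd) h3
    have hn3' : -3 ≤ n := by
      have hd : -n ∣ n * m := (neg_dvd).mpr hnd
      have := le_trans (Int.le_of_dvd (by omega) hd) h3
      omega
    have hm3' : -3 ≤ m := by
      have hd : -m ∣ n * m := (neg_dvd).mpr hmd
      have := le_trans (Int.le_of_dvd (by omega) hd) h3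
      omega
    interval_cases n <;> interval_cases m <;>
      first
        | omega
        | (push_cast at hrel; left; linarith)
        | (push_cast at hrel; right; left; linarith)
        | (push_cast at hrel; right; right; left; linarith)
        | (push_cast at hrel; right; right; right; left; linarith)
        | (push_cast at hrel; right; right; right; right; linarith)

lemma support_length_eq {δ : V} (hδ : δ ∈ R.pos) {α₀ : V} (hα₀ : α₀ ∈ R.support δ)
    (hshort : ∀ x ∈ R.support δ, x ≠ α₀ → ‖α₀‖ < ‖x‖) :
    ∀ x ∈ R.support δ, x ≠ α₀ → ∀ y ∈ R.support δ, y ≠ α₀ → ‖x‖ = ‖y‖ := by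
  have hα₀s : α₀ ∈ R.simple := R.support_subset_simple δ hα₀
  have hα₀r : α₀ ∈ R.roots := R.pos_subset (R.simple_subset hα₀s)
  have ha : (0:ℝ) < ⟪α₀, α₀⟫ := inner_self_pos' (R.root_ne_zero α₀ hα₀r)
  have hsq : ∀ x ∈ R.support δ, x ≠ α₀ → ⟪α₀, α₀⟫ < ⟪x, x⟫ := by
    intro x hx hne
    have hlt := hshort x hx hne
    rw [real_inner_self_eq_norm_mul_norm, real_inner_self_eq_norm_mul_norm]
    nlinarith [norm_nonneg α₀]
  have hclass : ∀ x ∈ R.support δ, x ≠ α₀ →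
      ⟪x, x⟫ = 2 * ⟪α₀, α₀⟫ ∨ ⟪x, x⟫ = 3 * ⟪α₀, α₀⟫ := by
    intro x hx hne
    obtain ⟨z, hzr, hzz, hz⟩ := R.propagate (R.reach_all hδ hα₀ x hx) hα₀
    have hxr : x ∈ R.roots := R.pos_subset (R.simple_subset (R.support_subset_simple δ hx))
    have hs := hsq x hx hne
    rcases hz with rfl | hz0
    · exfalso; linarith [hzz]
    · have hr := R.length_ratio hzr hxr hz0
      rw [hzz] at hr
      rcases hr with h | h | h | h | h
      · exfalso; linarith
      · left; linarith
      · right; linarith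
      · exfalso; linarith
      · exfalso; linarith
  intro x hx hxne y hy hyne
  have hxr : x ∈ R.roots := R.pos_subset (R.simple_subset (R.support_subset_simple δ hx))
  have hyr : y ∈ R.roots := R.pos_subset (R.simple_subset (R.support_subset_simple δ hy))
  have hsymm : Symmetric (fun u v =>
      u ∈ R.support δ ∧ v ∈ R.support δ ∧ u ≠ v ∧ ⟪u, v⟫ ≠ 0) := by
    rintro u v ⟨h1, h2, h3, h4⟩
    exact ⟨h2, h1, h3.symm, by rwa [real_inner_comm]⟩
  have hxy := Relation.ReflTransGen.trans
    (Std.Symm.symm (self := @Relation.ReflTransGen.symmetric _ _ ⟨fun a b h => hsymm h⟩) _ _ (R.reach_all hδ hα₀ x hx))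
    (R.reach_all hδ hα₀ y hy)
  obtain ⟨z, hzr, hzz, hz⟩ := R.propagate hxy hx
  apply norm_eq_of_inner_self_eq
  rcases hz with rfl | hz0
  · exact hzz.symm
  · have hr := R.length_ratio hzr hyr hz0
    rw [hzz] at hr
    rcases hclass x hx hxne with h2 | h2 <;> rcases hclass y hy hyne with h3 | h3 <;>
      rcases hr with h | h | h | h | h <;> linarith

end RootSystemData


/-- Suppose `δ` is an `(A,B)`-root, `α₀ ∈ C(δ) ∩ A` is strictly shorter than every other
simple root in `C(δ) \\ {α₀}`, and `β ∈ C(δ) \\ {α₀}` satisfies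
`c_{α₀}(δ) = −2(β,α₀)/(α₀,α₀)`.  Then `σ = β − (2(β,α₀)/(α₀,α₀))·α₀` is an `(A,B)`-root of
length `|β|` with `σ ≤ δ`, satisfying the sum inequality, all simple roots in `C(δ−σ)`
have the same length not greater than `|σ|`; in particular `δ` is significant. -/
theorem isSignificant_of_short_root
    {V : Type*} [NormedAddCommGroup V] [InnerProductSpace ℝ V]
    (R : RootSystemData V)
    (A B : Finset V) (hA : A ⊆ R.simple) (hB : B ⊆ R.simple) (hAB : Disjoint A B)
    (δ α₀ β : V) (hδ : R.IsABRoot A B δ)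
    (hα₀supp : α₀ ∈ R.support δ) (hα₀A : α₀ ∈ A)
    (hshort : ∀ x ∈ R.support δ, x ≠ α₀ → ‖α₀‖ < ‖x‖)
    (hβ : β ∈ R.support δ) (hβne : β ≠ α₀)
    (hc : R.coeff δ α₀ = -(2 * ⟪β, α₀⟫ / ⟪α₀, α₀⟫))
    (σ : V) (hσ : σ = β - (2 * ⟪β, α₀⟫ / ⟪α₀, α₀⟫) • α₀) :
    R.IsABRoot A B σ ∧ ‖σ‖ = ‖β‖ ∧ R.cle σ δ ∧
      (∑ b ∈ B, R.coeff σ b * ⟪b, b⟫) ≤ (∑ a ∈ A, R.coeff σ a * ⟪a, a⟫) ∧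
      (∀ x ∈ R.support (δ - σ), ∀ y ∈ R.support (δ - σ), ‖x‖ = ‖y‖) ∧
      (∀ x ∈ R.support (δ - σ), ‖x‖ ≤ ‖σ‖) ∧
      R.IsSignificant A B δ := by
  obtain ⟨hδpos, hδsupp, hδex⟩ := hδ
  have hα₀s : α₀ ∈ R.simple := R.support_subset_simple δ hα₀supp
  have hβs : β ∈ R.simple := R.support_subset_simple δ hβ
  have hα₀r : α₀ ∈ R.roots := R.pos_subset (R.simple_subset hα₀s)
  have hβr : β ∈ R.roots := R.pos_subset (R.simple_subset hβs)
  have ha : (0:ℝ) < ⟪α₀, α₀⟫ := RootSystemData.inner_self_pos' (R.root_ne_zero α₀ hα₀r)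
  set c : ℝ := 2 * ⟪β, α₀⟫ / ⟪α₀, α₀⟫ with hcdef
  have hδα₀ : 0 < R.coeff δ α₀ :=
    lt_of_le_of_ne (R.pos_coeff_nonneg δ hδpos α₀ hα₀s)
      (Ne.symm (Finset.mem_filter.mp hα₀supp).2)
  have h0c : 0 < -c := by rw [← hc]; exact hδα₀
  have hcneg : c < 0 := by linarith
  have hca : c * ⟪α₀, α₀⟫ = 2 * ⟪β, α₀⟫ := div_mul_cancel₀ _ (ne_of_gt ha)
  have hβα₀ : ⟪β, α₀⟫ < 0 := by nlinarith
  have hσr : σ ∈ R.roots := by rw [hσ]; exact R.reflect_mem β hβr α₀ hα₀r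
  have hσsum : σ = ∑ γ ∈ R.simple,
      ((if γ = β then (1:ℝ) else 0) + (if γ = α₀ then -c else 0)) • γ := by
    simp only [add_smul, ite_smul, one_smul, zero_smul]
    rw [Finset.sum_add_distrib, Finset.sum_ite_eq' R.simple β (fun γ => γ),
      Finset.sum_ite_eq' R.simple α₀ (fun γ => (-c) • γ), if_pos hβs, if_pos hα₀s, hσ,
      neg_smul, ← sub_eq_add_neg]
  have hcoeffσ : ∀ γ ∈ R.simple, R.coeff σ γ =
      (if γ = β then (1:ℝ) else 0) + (if γ = α₀ then -c else 0) := R.coeff_eq hσsum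
  have hcσβ : R.coeff σ β = 1 := by
    rw [hcoeffσ β hβs, if_pos rfl, if_neg hβne, add_zero]
  have hcσα₀ : R.coeff σ α₀ = -c := by
    rw [hcoeffσ α₀ hα₀s, if_neg (Ne.symm hβne), if_pos rfl, zero_add]
  have hcσother : ∀ γ ∈ R.simple, γ ≠ β → γ ≠ α₀ → R.coeff σ γ = 0 := by
    intro γ hγ h1 h2
    rw [hcoeffσ γ hγ, if_neg h1, if_neg h2, add_zero]
  have hσpos : σ ∈ R.pos := R.mem_pos_of_coeff_pos hσr hβs (by rw [hcσβ]; norm_num)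
  have hABσ : R.IsABRoot A B σ := by
    refine ⟨hσpos, ?_, α₀, hα₀A, by rw [hcσα₀]; linarith⟩
    intro γ hγ
    have hγs := R.support_subset_simple σ hγ
    by_cases h1 : γ = β
    · exact h1 ▸ hδsupp hβ
    · by_cases h2 : γ = α₀
      · exact h2 ▸ hδsupp hα₀supp
      · exact absurd (hcσother γ hγs h1 h2) (Finset.mem_filter.mp hγ).2
  have hσβnorm : ‖σ‖ = ‖β‖ := by
    apply RootSystemData.norm_eq_of_inner_self_eq
    rw [hσ]
    exact RootSystemData.reflect_inner_self β α₀ (ne_of_gt ha)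
  have hcδβ1 : 1 ≤ R.coeff δ β := by
    obtain ⟨n, hn⟩ := R.coeff_int hδpos hβs
    have hpos : 0 < R.coeff δ β :=
      lt_of_le_of_ne (R.pos_coeff_nonneg δ hδpos β hβs)
        (Ne.symm (Finset.mem_filter.mp hβ).2)
    rw [hn] at hpos ⊢
    have h1 : 0 < n := by exact_mod_cast hpos
    exact_mod_cast h1
  have hcle : R.cle σ δ := by
    intro γ hγ
    by_cases h1 : γ = β
    · subst h1; rw [hcσβ]; exact hcδβ1
    · by_cases h2 : γ = α₀
      · subst h2; rw [hcσα₀, hc]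
      · rw [hcσother γ hγ h1 h2]
        exact R.pos_coeff_nonneg δ hδpos γ hγ
  have hm' : ⟪β, β⟫ ≤ -c * ⟪α₀, α₀⟫ := by
    obtain ⟨m, hm⟩ := R.crystallographic α₀ hα₀r β hβr
    have hbb : (0:ℝ) < ⟪β, β⟫ := RootSystemData.inner_self_pos' (R.root_ne_zero β hβr)
    have hmval : (m:ℝ) * ⟪β, β⟫ = 2 * ⟪β, α₀⟫ := by
      rw [← hm, div_mul_cancel₀ _ (ne_of_gt hbb), real_inner_comm α₀ β]
    have hmneg : (m:ℝ) < 0 := by nlinarith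
    have hm1 : (m:ℝ) ≤ -1 := by
      have h1 : m < 0 := by exact_mod_cast hmneg
      have h2 : m ≤ -1 := by omega
      exact_mod_cast h2
    nlinarith [mul_nonneg (by linarith : (0:ℝ) ≤ -(m:ℝ) - 1) (le_of_lt hbb)]
  have hsums : (∑ b ∈ B, R.coeff σ b * ⟪b, b⟫) ≤ ∑ a ∈ A, R.coeff σ a * ⟪a, a⟫ := by
    have hL : ∑ b ∈ B, R.coeff σ b * ⟪b, b⟫
        = if β ∈ B then ⟪β, β⟫ else 0 := by
      rw [show ∑ b ∈ B, R.coeff σ b * ⟪b, b⟫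
          = ∑ b ∈ B, (if b = β then ⟪β, β⟫ else 0) from Finset.sum_congr rfl ?_,
        Finset.sum_ite_eq' B β (fun _ => ⟪β, β⟫)]
      intro b hb
      have hbs : b ∈ R.simple := hB hb
      have hbα₀ : b ≠ α₀ := fun hba =>
        Finset.disjoint_left.mp hAB hα₀A (hba ▸ hb)
      by_cases hbβ : b = β
      · subst hbβ; rw [if_pos rfl, hcσβ, one_mul]
      · rw [if_neg hbβ, hcσother b hbs hbβ hbα₀, zero_mul]
    have hR : -c * ⟪α₀, α₀⟫ ≤ ∑ a ∈ A, R.coeff σ a * ⟪a, a⟫ := by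
      have hstep := Finset.single_le_sum (f := fun a => R.coeff σ a * ⟪a, a⟫)
        (fun a haA => mul_nonneg (R.pos_coeff_nonneg σ hσpos a (hA haA))
          real_inner_self_nonneg) hα₀A
      have hstep' : R.coeff σ α₀ * ⟪α₀, α₀⟫ ≤ ∑ a ∈ A, R.coeff σ a * ⟪a, a⟫ := hstep
      rw [hcσα₀] at hstep'
      exact hstep' 
    rw [hL]
    split
    · linarith
    · have hbb : (0:ℝ) ≤ ⟪β, β⟫ := real_inner_self_nonneg
      nlinarith
  have hsuppd : ∀ x ∈ R.support (δ - σ), x ∈ R.support δ ∧ x ≠ α₀ := by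
    intro x hx
    have hxs := R.support_subset_simple _ hx
    have hxne := (Finset.mem_filter.mp hx).2
    rw [R.coeff_sub hxs] at hxne
    have hxα₀ : x ≠ α₀ := by
      rintro rfl
      rw [hcσα₀, hc] at hxne
      simp at hxne
    refine ⟨?_, hxα₀⟩
    by_cases hxβ : x = β
    · exact hxβ ▸ hβ
    · rw [hcσother x hxs hxβ hxα₀, sub_zero] at hxne
      exact Finset.mem_filter.mpr ⟨hxs, hxne⟩
  have hlen : ∀ x ∈ R.support (δ - σ), ‖x‖ = ‖β‖ := by
    intro x hx
    obtain ⟨hx1, hx2⟩ := hsuppd x hx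
    exact R.support_length_eq hδpos hα₀supp hshort x hx1 hx2 β hβ hβne
  exact ⟨hABσ, hσβnorm, hcle, hsums,
    fun x hx y hy => (hlen x hx).trans (hlen y hy).symm,
    fun x hx => by rw [hlen x hx, ← hσβnorm],
    ⟨hδpos, hδsupp, hδex⟩, σ, hABσ, hcle, hsums,
    fun x hx y hy => (hlen x hx).trans (hlen y hy).symm,
    fun x hx => by rw [hlen x hx, ← hσβnorm]⟩
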